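/- Let n ≥ 1, let Ω ⊆ ℝⁿ be open, and let s : Ω → ℝ be C^∞ with ∇s(x) ≠ 0 for every x ∈ Ω. Define s̄ := s / ‖∇s‖. Then s̄ is C^∞ on Ω, s̄ has the same zero set as s, and there exists a C^∞ function A : Ω → ℝ such that ‖∇s̄(x)‖² = 1 + s(x) · A(x) for all x ∈ Ω. -/

import Mathlib

open InnerProductSpace

/-- Auxiliary: on an open set, the gradient of a `C^∞` function is `C^∞`. -/
theorem gradient_contDiffOn_aux {E : Type*} [NormedAddCommGroup E] [InnerProductSpace ℝ E]
    [CompleteSpace E] {Ω : Set E} (hΩ : IsOpen Ω) {f : E → ℝ}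
    (hf : ContDiffOn ℝ (⊤ : ℕ∞) f Ω) :
    ContDiffOn ℝ (⊤ : ℕ∞) (fun z => gradient f z) Ω := by
  have h1 : ContDiffOn ℝ (⊤ : ℕ∞) (fun z => fderivWithin ℝ f Ω z) Ω :=
    hf.fderivWithin hΩ.uniqueDiffOn (by exact_mod_cast le_top)
  have h2 : ContDiffOn ℝ (⊤ : ℕ∞) (fun z => fderiv ℝ f z) Ω := by
    refine h1.congr fun x hx => ?_
    exact (fderivWithin_of_isOpen hΩ hx).symm
  have h3 : ContDiff ℝ (⊤ : ℕ∞) fun L : E →L[ℝ] ℝ => (toDual ℝ E).symm L :=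
    (toDual ℝ E).symm.toContinuousLinearEquiv.toContinuousLinearMap.contDiff
  exact h3.comp_contDiffOn h2

/-- Flat-background instance of the claim of Section 2.2: if `s` is `C^∞` on an open set
`Ω ⊆ ℝⁿ` with nonvanishing gradient, then `s̄ := s/‖∇s‖` is `C^∞` on `Ω`, has the same zero
set as `s`, and is a normal defining function: `‖∇s̄‖² = 1 + s·A` for a smooth `A`. -/
theorem normal_defining_function_exists
    (n : ℕ) (hn : 1 ≤ n) (Ω : Set (EuclideanSpace ℝ (Fin n))) (hΩ : IsOpen Ω)
    (s : EuclideanSpace ℝ (Fin n) → ℝ) (hs : ContDiffOn ℝ (⊤ : ℕ∞) s Ω)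
    (hgrad : ∀ x ∈ Ω, gradient s x ≠ 0) :
    ContDiffOn ℝ (⊤ : ℕ∞) (fun z => s z / ‖gradient s z‖) Ω ∧
    (∀ x ∈ Ω, (s x / ‖gradient s x‖ = 0 ↔ s x = 0)) ∧
    ∃ A : EuclideanSpace ℝ (Fin n) → ℝ, ContDiffOn ℝ (⊤ : ℕ∞) A Ω ∧
      ∀ x ∈ Ω, ‖gradient (fun z => s z / ‖gradient s z‖) x‖ ^ 2 = 1 + s x * A x := by
  set G : EuclideanSpace ℝ (Fin n) → EuclideanSpace ℝ (Fin n) := fun z => gradient s z with hGdef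
  have hG : ContDiffOn ℝ (⊤ : ℕ∞) G Ω := gradient_contDiffOn_aux hΩ hs
  have hg : ContDiffOn ℝ (⊤ : ℕ∞) (fun z => ‖G z‖) Ω := fun x hx =>
    (hG x hx).norm ℝ (hgrad x hx)
  have hgne : ∀ x ∈ Ω, ‖G x‖ ≠ 0 := fun x hx => norm_ne_zero_iff.2 (hgrad x hx)
  set gInv : EuclideanSpace ℝ (Fin n) → ℝ := fun z => ‖G z‖⁻¹ with hgInvdef
  have hgInv : ContDiffOn ℝ (⊤ : ℕ∞) gInv Ω := hg.inv hgne
  set v : EuclideanSpace ℝ (Fin n) → EuclideanSpace ℝ (Fin n) := fun z => gradient gInv z with hvdef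
  have hv : ContDiffOn ℝ (⊤ : ℕ∞) v Ω := gradient_contDiffOn_aux hΩ hgInv
  have hsbar : ContDiffOn ℝ (⊤ : ℕ∞) (fun z => s z / ‖gradient s z‖) Ω :=
    hs.div hg hgne
  refine ⟨hsbar, fun x hx => ?_, ?_⟩
  · rw [div_eq_zero_iff]
    simp [hgne x hx, hgrad x hx]
  · refine ⟨fun z => 2 * gInv z * (inner ℝ (G z) (v z) : ℝ) + s z * (inner ℝ (v z) (v z) : ℝ),
      ?_, fun x hx => ?_⟩
    · exact ((contDiffOn_const.mul hgInv).mul (hG.inner ℝ hv)).add (hs.mul (hv.inner ℝ hv))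
    · -- compute the gradient of s̄ at x
      have hsx : HasFDerivAt s (fderiv ℝ s x) x :=
        (((hs x hx).contDiffAt (hΩ.mem_nhds hx)).differentiableAt (by simp)).hasFDerivAt
      have hgx : HasFDerivAt gInv (fderiv ℝ gInv x) x :=
        (((hgInv x hx).contDiffAt (hΩ.mem_nhds hx)).differentiableAt (by simp)).hasFDerivAt
      have hmul : HasFDerivAt (fun z => s z / ‖gradient s z‖)
          (s x • fderiv ℝ gInv x + gInv x • fderiv ℝ s x) x := by
        have := hsx.mul hgx
        rw [show (fun z => s z / ‖gradient s z‖) = s * gInv from funext fun z => div_eq_mul_inv _ _]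
        exact this
      have hgradbar : gradient (fun z => s z / ‖gradient s z‖) x
          = s x • v x + gInv x • G x := by
        rw [gradient, hmul.fderiv, map_add, map_smul, map_smul]
        rfl
      rw [hgradbar]
      have hnorm : ‖s x • v x + gInv x • G x‖ ^ 2
          = ‖s x • v x‖ ^ 2 + 2 * (inner ℝ (s x • v x) (gInv x • G x) : ℝ)
            + ‖gInv x • G x‖ ^ 2 := norm_add_sq_real _ _
      rw [hnorm]
      have h1 : ‖gInv x • G x‖ ^ 2 = 1 := by
        rw [norm_smul]
        simp only [gInv, Real.norm_eq_abs, abs_inv, abs_norm]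
        field_simp [hgne x hx]
      have h2 : (inner ℝ (s x • v x) (gInv x • G x) : ℝ)
          = s x * gInv x * (inner ℝ (v x) (G x) : ℝ) := by
        rw [real_inner_smul_left, real_inner_smul_right]; ring
      have h3 : ‖s x • v x‖ ^ 2 = s x ^ 2 * (inner ℝ (v x) (v x) : ℝ) := by
        rw [norm_smul, real_inner_self_eq_norm_sq]
        simp [mul_pow]
      rw [h1, h2, h3, real_inner_comm (G x) (v x)]
      ring
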